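/- A fibration f : X → B in a tribe E is a homotopy equivalence in E if and only if the object (X, f) of the local tribe E(B) is contractible, i.e. the map (X, f) → (B, 1_B) to the terminal object of E(B) is a homotopy equivalence in the tribe E(B). -/

import Mathlib

open CategoryTheory CategoryTheory.Limits

universe w v u v' u' v'' u''

/-- A *clan* structure on a category `E`: a terminal object together with a class of
maps (the *fibrations*) containing the isomorphisms, closed under composition and
base changes (every fibration is carrable and any pullback of a fibration is a
fibration), and containing every map to the terminal object. -/
structure Clan (E : Type u) [Category.{v} E] where
  fib : MorphismProperty E
  one : E
  one_isTerminal : IsTerminal one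
  fib_of_isIso : ∀ ⦃A B : E⦄ (f : A ⟶ B), IsIso f → fib f
  fib_comp : ∀ ⦃A B C : E⦄ {f : A ⟶ B} {g : B ⟶ C}, fib f → fib g → fib (f ≫ g)
  carrable : ∀ ⦃A B X : E⦄ (f : A ⟶ B) ⦃p : X ⟶ B⦄, fib p →
    ∃ (P : E) (p₁ : P ⟶ A) (p₂ : P ⟶ X), IsPullback p₁ p₂ f p
  fib_baseChange : ∀ ⦃P A X B : E⦄ {p₁ : P ⟶ A} {p₂ : P ⟶ X} {f : A ⟶ B} {p : X ⟶ B},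
    IsPullback p₁ p₂ f p → fib p → fib p₁
  fib_toOne : ∀ X : E, fib (one_isTerminal.from X)

/-- A *morphism of clans* is a functor taking fibrations to fibrations, preserving
base changes of fibrations, and taking the terminal object to a terminal object. -/
structure IsClanMorphism {E : Type u} {E' : Type u'} [Category.{v} E] [Category.{v'} E']
    (C : Clan E) (D : Clan E') (F : E ⥤ E') : Prop where
  map_fib : ∀ ⦃A B : E⦄ (f : A ⟶ B), C.fib f → D.fib (F.map f)
  map_isPullback : ∀ ⦃P A X B : E⦄ {p₁ : P ⟶ A} {p₂ : P ⟶ X} {f : A ⟶ B} {p : X ⟶ B},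
    IsPullback p₁ p₂ f p → C.fib p →
      IsPullback (F.map p₁) (F.map p₂) (F.map f) (F.map p)
  preserves_terminal : Nonempty (IsTerminal (F.obj C.one))

/-- The local category `E(A)`: the full subcategory of `Over A` spanned by the
fibrations `X ↠ A`. -/
abbrev ClanSlice {E : Type u} [Category.{v} E] (C : Clan E) (A : E) :=
  ObjectProperty.FullSubcategory (fun X : Over A => C.fib X.hom)

/-- The underlying morphism of `Over A` of a morphism of `ClanSlice C A`. -/
def ClanSlice.homOf {E : Type u} [Category.{v} E] {C : Clan E} {A : E}
    {X Y : ClanSlice C A} (u : X ⟶ Y) : X.obj ⟶ Y.obj := u.hom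

/-- A map in a clan is *anodyne* if it has the left lifting property with respect to
every fibration. -/
def Anodyne {E : Type u} [Category.{v} E] (C : Clan E) : MorphismProperty E :=
  fun _ _ u => ∀ ⦃X Y : E⦄ (f : X ⟶ Y), C.fib f → HasLiftingProperty u f

/-- A *tribe* is a clan in which every map factors as an anodyne map followed by a
fibration, and every base change of an anodyne map along a fibration is anodyne. -/
structure Tribe (E : Type u) [Category.{v} E] extends Clan E where
  exists_fact : ∀ ⦃A B : E⦄ (f : A ⟶ B), ∃ (Z : E) (u : A ⟶ Z) (p : Z ⟶ B),
    Anodyne toClan u ∧ fib p ∧ u ≫ p = f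
  anodyne_baseChange : ∀ ⦃P A X B : E⦄ {p₁ : P ⟶ A} {p₂ : P ⟶ X} {f : A ⟶ B} {u : X ⟶ B},
    IsPullback p₁ p₂ f u → fib f → Anodyne toClan u → Anodyne toClan p₁

/-- A *path object* for `B`: a factorization of the diagonal `B ⟶ B × B` as an
anodyne map `σ` followed by a fibration `(∂₀, ∂₁)`.  The product `B × B` is
witnessed by a pullback square over the terminal object. -/
structure PathObj {E : Type u} [Category.{v} E] (T : Tribe E) (B : E) where
  P : E
  σ : B ⟶ P
  d₀ : P ⟶ B
  d₁ : P ⟶ B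
  σ_d₀ : σ ≫ d₀ = 𝟙 B
  σ_d₁ : σ ≫ d₁ = 𝟙 B
  anodyne_σ : Anodyne T.toClan σ
  BB : E
  pr₁ : BB ⟶ B
  pr₂ : BB ⟶ B
  isProd : IsPullback pr₁ pr₂ (T.one_isTerminal.from B) (T.one_isTerminal.from B)
  pair : P ⟶ BB
  pair_pr₁ : pair ≫ pr₁ = d₀
  pair_pr₂ : pair ≫ pr₂ = d₁
  fib_pair : T.fib pair

/-- Two maps `f g : A ⟶ B` in a tribe are *homotopic* if there are a path object for
`B` and a homotopy `H : A ⟶ PB` with `∂₀ ∘ H = f` and `∂₁ ∘ H = g`. -/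
def Homotopic {E : Type u} [Category.{v} E] (T : Tribe E) {A B : E} (f g : A ⟶ B) : Prop :=
  ∃ (Q : PathObj T B) (H : A ⟶ Q.P), H ≫ Q.d₀ = f ∧ H ≫ Q.d₁ = g

/-- A map is a *homotopy equivalence* if it admits a homotopy inverse. -/
def IsHomotopyEquiv {E : Type u} [Category.{v} E] (T : Tribe E) {X Y : E} (f : X ⟶ Y) : Prop :=
  ∃ g : Y ⟶ X, Homotopic T (f ≫ g) (𝟙 X) ∧ Homotopic T (g ≫ f) (𝟙 Y)

/-- The local category `E(A)` of a tribe: the full subcategory of `Over A` spanned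
by the fibrations `X ↠ A`. -/
abbrev TribeSlice {E : Type u} [Category.{v} E] (T : Tribe E) (A : E) :=
  ObjectProperty.FullSubcategory (fun X : Over A => T.fib X.hom)

/-- The underlying morphism of `Over A` of a morphism of `TribeSlice T A`. -/
def TribeSlice.homOf {E : Type u} [Category.{v} E] {T : Tribe E} {A : E}
    {X Y : TribeSlice T A} (u : X ⟶ Y) : X.obj ⟶ Y.obj := u.hom

/-- A *morphism of tribes* is a morphism of clans that moreover takes anodyne maps
to anodyne maps. -/
structure IsTribeMorphism {E : Type u} {E' : Type u'} [Category.{v} E] [Category.{v'} E']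
    (T : Tribe E) (T' : Tribe E') (F : E ⥤ E')
    extends IsClanMorphism T.toClan T'.toClan F : Prop where
  map_anodyne : ∀ ⦃A B : E⦄ (u : A ⟶ B), Anodyne T.toClan u → Anodyne T'.toClan (F.map u)

/-- The homotopy relation, as a `HomRel`; the homotopy category `Ho(E)` is the
quotient of `E` by this congruence. -/
def HoRel {E : Type u} [Category.{v} E] (T : Tribe E) : HomRel E :=
  fun {_ _} f g => Homotopic T f g

/-! ### Auxiliary lemmas -/

namespace TribeAux

variable {E : Type u} [Category.{v} E]

/-- Extract a lift from an anodyne map against a fibration. -/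
lemma anodyne_lift {C : Clan E} {A D X Y : E} {u : A ⟶ D} (hu : Anodyne C u)
    {p : X ⟶ Y} (hp : C.fib p) {a : A ⟶ X} {b : D ⟶ Y} (w : a ≫ p = u ≫ b) :
    ∃ l : D ⟶ X, u ≫ l = a ∧ l ≫ p = b := by
  obtain ⟨⟨l, h1, h2⟩⟩ := ((hu p hp).sq_hasLift (CommSq.mk w)).exists_lift
  exact ⟨l, h1, h2⟩

variable (T : Tribe E)

/-- Every object of a tribe admits a path object. -/
lemma exists_pathObj (B : E) : Nonempty (PathObj T B) := by
  obtain ⟨BB, pr₁, pr₂, hP⟩ := T.carrable (T.one_isTerminal.from B) (T.fib_toOne B)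
  obtain ⟨P, σ, pr, hσ, hpr, hfact⟩ :=
    T.exists_fact (hP.lift (𝟙 B) (𝟙 B) rfl)
  refine ⟨⟨P, σ, pr ≫ pr₁, pr ≫ pr₂, ?_, ?_, hσ, BB, pr₁, pr₂, hP, pr, rfl, rfl, hpr⟩⟩
  · rw [← Category.assoc, hfact, hP.lift_fst]
  · rw [← Category.assoc, hfact, hP.lift_snd]

variable {T}

lemma pathObj_fib_d₀ {B : E} (Q : PathObj T B) : T.fib Q.d₀ := by
  rw [← Q.pair_pr₁]
  exact T.fib_comp Q.fib_pair (T.fib_baseChange Q.isProd (T.fib_toOne B))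

lemma pathObj_fib_d₁ {B : E} (Q : PathObj T B) : T.fib Q.d₁ := by
  rw [← Q.pair_pr₂]
  exact T.fib_comp Q.fib_pair (T.fib_baseChange Q.isProd.flip (T.fib_toOne B))

/-- The path object with the two end evaluations swapped. -/
def PathObj.symm {B : E} (Q : PathObj T B) : PathObj T B where
  P := Q.P
  σ := Q.σ
  d₀ := Q.d₁
  d₁ := Q.d₀
  σ_d₀ := Q.σ_d₁
  σ_d₁ := Q.σ_d₀
  anodyne_σ := Q.anodyne_σ
  BB := Q.BB
  pr₁ := Q.pr₂
  pr₂ := Q.pr₁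
  isProd := Q.isProd.flip
  pair := Q.pair
  pair_pr₁ := Q.pair_pr₂
  pair_pr₂ := Q.pair_pr₁
  fib_pair := Q.fib_pair

variable (T)

lemma homotopic_refl {A B : E} (f : A ⟶ B) : Homotopic T f f := by
  obtain ⟨Q⟩ := exists_pathObj T B
  exact ⟨Q, f ≫ Q.σ, by rw [Category.assoc, Q.σ_d₀, Category.comp_id],
    by rw [Category.assoc, Q.σ_d₁, Category.comp_id]⟩

lemma homotopic_symm {A B : E} {f g : A ⟶ B} (h : Homotopic T f g) : Homotopic T g f := by
  obtain ⟨Q, H, h0, h1⟩ := h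
  exact ⟨PathObj.symm Q, H, h1, h0⟩

lemma homotopic_precomp {Z A B : E} {u v : A ⟶ B} (h : Homotopic T u v) (w : Z ⟶ A) :
    Homotopic T (w ≫ u) (w ≫ v) := by
  obtain ⟨Q, H, h0, h1⟩ := h
  exact ⟨Q, w ≫ H, by rw [Category.assoc, h0], by rw [Category.assoc, h1]⟩

/-- A homotopy can be transported into any path object of the codomain (after composing
with a further map). -/
lemma homotopic_comp_into {A B D : E} {u v : A ⟶ B} (h : Homotopic T u v) (w : B ⟶ D)
    (R : PathObj T D) : ∃ H : A ⟶ R.P, H ≫ R.d₀ = u ≫ w ∧ H ≫ R.d₁ = v ≫ w := by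
  obtain ⟨Q, H, h0, h1⟩ := h
  obtain ⟨bot, hb1, hb2⟩ : ∃ b : Q.P ⟶ R.BB,
      b ≫ R.pr₁ = Q.d₀ ≫ w ∧ b ≫ R.pr₂ = Q.d₁ ≫ w :=
    ⟨R.isProd.lift _ _ (T.one_isTerminal.hom_ext _ _),
      R.isProd.lift_fst _ _ _, R.isProd.lift_snd _ _ _⟩
  have hw : (w ≫ R.σ) ≫ R.pair = Q.σ ≫ bot := by
    apply R.isProd.hom_ext
    · rw [Category.assoc, Category.assoc, R.pair_pr₁, R.σ_d₀, Category.comp_id,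
        Category.assoc, hb1, ← Category.assoc, Q.σ_d₀, Category.id_comp]
    · rw [Category.assoc, Category.assoc, R.pair_pr₂, R.σ_d₁, Category.comp_id,
        Category.assoc, hb2, ← Category.assoc, Q.σ_d₁, Category.id_comp]
  obtain ⟨θ, hθ1, hθ2⟩ := anodyne_lift Q.anodyne_σ R.fib_pair hw
  have e0 : θ ≫ R.d₀ = Q.d₀ ≫ w := by
    rw [← R.pair_pr₁, ← Category.assoc, hθ2, hb1]
  have e1 : θ ≫ R.d₁ = Q.d₁ ≫ w := by
    rw [← R.pair_pr₂, ← Category.assoc, hθ2, hb2]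
  exact ⟨H ≫ θ, by rw [Category.assoc, e0, ← Category.assoc, h0],
    by rw [Category.assoc, e1, ← Category.assoc, h1]⟩

lemma homotopic_comp {A B D : E} {u v : A ⟶ B} (h : Homotopic T u v) (w : B ⟶ D) :
    Homotopic T (u ≫ w) (v ≫ w) := by
  obtain ⟨R⟩ := exists_pathObj T D
  obtain ⟨H, h0, h1⟩ := homotopic_comp_into T h w R
  exact ⟨R, H, h0, h1⟩

variable {T}

/-- The canonical map `X ⟶ X ×_B P` induced by a section-like map `σ` is a pullback of
`σ` along a fibration. -/
lemma isPullback_of_section {W X P B' : E} {w₁ : W ⟶ X} {w₂ : W ⟶ P} {p : X ⟶ B'}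
    {d : P ⟶ B'} (h : IsPullback w₁ w₂ p d) {σ : B' ⟶ P} (hσ : σ ≫ d = 𝟙 B')
    {i : X ⟶ W} (hi₁ : i ≫ w₁ = 𝟙 X) (hi₂ : i ≫ w₂ = p ≫ σ) :
    IsPullback i p w₂ σ := by
  refine IsPullback.of_isLimit (PullbackCone.IsLimit.mk hi₂ (fun s => s.fst ≫ w₁) ?_ ?_ ?_)
  · intro s
    have e1 : (s.fst ≫ w₁) ≫ p = s.snd := by
      rw [Category.assoc, h.w, ← Category.assoc, s.condition, Category.assoc, hσ,
        Category.comp_id]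
    apply h.hom_ext
    · rw [Category.assoc, hi₁, Category.comp_id]
    · rw [Category.assoc, hi₂, ← Category.assoc, e1, s.condition]
  · intro s
    rw [Category.assoc, h.w, ← Category.assoc, s.condition, Category.assoc, hσ,
      Category.comp_id]
  · intro s m hm1 _
    show m = s.fst ≫ w₁
    rw [← hm1, Category.assoc, hi₁, Category.comp_id]

variable (T)

lemma homotopic_trans {A B : E} {u v w : A ⟶ B} (h1 : Homotopic T u v)
    (h2 : Homotopic T v w) : Homotopic T u w := by
  obtain ⟨Q, H₁, e0, e1⟩ := h1
  obtain ⟨H₂, f0, f1⟩ := homotopic_comp_into T h2 (𝟙 B) Q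
  rw [Category.comp_id] at f0 f1
  obtain ⟨C2, c₁, c₂, hC⟩ := T.carrable Q.d₁ (pathObj_fib_d₀ Q)
  have fibc₂ : T.fib c₂ := T.fib_baseChange hC.flip (pathObj_fib_d₁ Q)
  obtain ⟨j, hj1, hj2⟩ : ∃ j : Q.P ⟶ C2, j ≫ c₁ = 𝟙 Q.P ∧ j ≫ c₂ = Q.d₁ ≫ Q.σ :=
    ⟨hC.lift (𝟙 Q.P) (Q.d₁ ≫ Q.σ)
      (by rw [Category.id_comp, Category.assoc, Q.σ_d₀, Category.comp_id]),
      hC.lift_fst _ _ _, hC.lift_snd _ _ _⟩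
  have hjano : Anodyne T.toClan j :=
    T.anodyne_baseChange (isPullback_of_section hC Q.σ_d₀ hj1 hj2) fibc₂ Q.anodyne_σ
  obtain ⟨bot, hb1, hb2⟩ : ∃ b : C2 ⟶ Q.BB,
      b ≫ Q.pr₁ = c₁ ≫ Q.d₀ ∧ b ≫ Q.pr₂ = c₂ ≫ Q.d₁ :=
    ⟨Q.isProd.lift _ _ (T.one_isTerminal.hom_ext _ _),
      Q.isProd.lift_fst _ _ _, Q.isProd.lift_snd _ _ _⟩
  have hw : (𝟙 Q.P) ≫ Q.pair = j ≫ bot := by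
    rw [Category.id_comp]
    apply Q.isProd.hom_ext
    · rw [Q.pair_pr₁, Category.assoc, hb1, ← Category.assoc, hj1, Category.id_comp]
    · rw [Q.pair_pr₂, Category.assoc, hb2, ← Category.assoc, hj2, Category.assoc,
        Q.σ_d₁, Category.comp_id]
  obtain ⟨cmp, hc1, hc2⟩ := anodyne_lift hjano Q.fib_pair hw
  obtain ⟨χ, hχ1, hχ2⟩ : ∃ χ : A ⟶ C2, χ ≫ c₁ = H₁ ∧ χ ≫ c₂ = H₂ :=
    ⟨hC.lift H₁ H₂ (by rw [e1, f0]), hC.lift_fst _ _ _, hC.lift_snd _ _ _⟩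
  -- `cmp ≫ Q.pair = bot`, hence endpoints of `χ ≫ cmp` are `u` and `w`.
  refine ⟨Q, χ ≫ cmp, ?_, ?_⟩
  · rw [← Q.pair_pr₁, Category.assoc, ← Category.assoc cmp, hc2, hb1,
      ← Category.assoc, hχ1, e0]
  · rw [← Q.pair_pr₂, Category.assoc, ← Category.assoc cmp, hc2, hb2,
      ← Category.assoc, hχ2, f1]

/-- A fibration admitting a homotopy inverse on the base has a (strict) section. -/
lemma section_of_fib {Y D : E} {p : Y ⟶ D} (hp : T.fib p) {g : D ⟶ Y}
    (hK : Homotopic T (g ≫ p) (𝟙 D)) : ∃ s : D ⟶ Y, s ≫ p = 𝟙 D := by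
  obtain ⟨Q, K, k0, k1⟩ := hK
  obtain ⟨W, w₁, w₂, hW⟩ := T.carrable p (pathObj_fib_d₀ Q)
  have hfibw₂ : T.fib w₂ := T.fib_baseChange hW.flip hp
  obtain ⟨i, hi1, hi2⟩ : ∃ i : Y ⟶ W, i ≫ w₁ = 𝟙 Y ∧ i ≫ w₂ = p ≫ Q.σ :=
    ⟨hW.lift (𝟙 Y) (p ≫ Q.σ)
      (by rw [Category.id_comp, Category.assoc, Q.σ_d₀, Category.comp_id]),
      hW.lift_fst _ _ _, hW.lift_snd _ _ _⟩
  have hiano : Anodyne T.toClan i :=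
    T.anodyne_baseChange (isPullback_of_section hW Q.σ_d₀ hi1 hi2) hfibw₂ Q.anodyne_σ
  have hsq : (𝟙 Y) ≫ p = i ≫ (w₂ ≫ Q.d₁) := by
    rw [Category.id_comp, ← Category.assoc, hi2, Category.assoc, Q.σ_d₁, Category.comp_id]
  obtain ⟨L, hL1, hL2⟩ := anodyne_lift hiano hp hsq
  obtain ⟨c, hcg, hcK⟩ : ∃ c : D ⟶ W, c ≫ w₁ = g ∧ c ≫ w₂ = K :=
    ⟨hW.lift g K k0.symm, hW.lift_fst _ _ _, hW.lift_snd _ _ _⟩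
  refine ⟨c ≫ L, ?_⟩
  rw [Category.assoc, hL2, ← Category.assoc, hcK, k1]

/-- A retraction of an anodyne map is a homotopy inverse of it. -/
lemma retr_homotopy {A D : E} {u : A ⟶ D} (hu : Anodyne T.toClan u) {r : D ⟶ A}
    (hr : u ≫ r = 𝟙 A) : Homotopic T (r ≫ u) (𝟙 D) := by
  obtain ⟨Q⟩ := exists_pathObj T D
  obtain ⟨bot, hb1, hb2⟩ : ∃ b : D ⟶ Q.BB,
      b ≫ Q.pr₁ = r ≫ u ∧ b ≫ Q.pr₂ = 𝟙 D :=
    ⟨Q.isProd.lift _ _ (T.one_isTerminal.hom_ext _ _),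
      Q.isProd.lift_fst _ _ _, Q.isProd.lift_snd _ _ _⟩
  have hw : (u ≫ Q.σ) ≫ Q.pair = u ≫ bot := by
    apply Q.isProd.hom_ext
    · rw [Category.assoc, Category.assoc, Q.pair_pr₁, Q.σ_d₀, Category.comp_id,
        Category.assoc, hb1, ← Category.assoc, hr, Category.id_comp]
    · rw [Category.assoc, Category.assoc, Q.pair_pr₂, Q.σ_d₁, Category.comp_id,
        Category.assoc, hb2, Category.comp_id]
  obtain ⟨H, hH1, hH2⟩ := anodyne_lift hu Q.fib_pair hw
  refine ⟨Q, H, ?_, ?_⟩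
  · rw [← Q.pair_pr₁, ← Category.assoc, hH2, hb1]
  · rw [← Q.pair_pr₂, ← Category.assoc, hH2, hb2]

section Slice

variable {B : E} (TB : Tribe (TribeSlice T B))

lemma slice_comp_left {U V W : TribeSlice T B} (u : U ⟶ V) (v : V ⟶ W) :
    (TribeSlice.homOf (u ≫ v)).left
      = (TribeSlice.homOf u).left ≫ (TribeSlice.homOf v).left := rfl

lemma slice_id_left (U : TribeSlice T B) :
    (TribeSlice.homOf (𝟙 U)).left = 𝟙 U.obj.left := rfl

/-- A `TB`-anodyne morphism of the slice tribe is anodyne in `E`. -/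
lemma slice_anodyne_down
    (hTB : ∀ {U V : TribeSlice T B} (u : U ⟶ V),
      TB.fib u ↔ T.fib (TribeSlice.homOf u).left)
    {U V : TribeSlice T B} (ub : U ⟶ V) (h : Anodyne TB.toClan ub) :
    Anodyne T.toClan (TribeSlice.homOf ub).left := by
  intro Y Z p hp
  constructor
  intro a b sq
  obtain ⟨P', p₁, p₂, hP⟩ := T.carrable b hp
  have hfib₁ : T.fib p₁ := T.fib_baseChange hP hp
  refine CommSq.HasLift.mk ?_
  let Pb : TribeSlice T B := ⟨Over.mk (p₁ ≫ V.obj.hom), T.fib_comp hfib₁ V.property⟩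
  let pb1 : Pb ⟶ V := ObjectProperty.homMk (Over.homMk p₁ rfl : Pb.obj ⟶ V.obj)
  obtain ⟨a', ha1, ha2⟩ : ∃ a' : U.obj.left ⟶ P',
      a' ≫ p₁ = (TribeSlice.homOf ub).left ∧ a' ≫ p₂ = a :=
    ⟨hP.lift _ a sq.w.symm, hP.lift_fst _ _ _, hP.lift_snd _ _ _⟩
  have haw : a' ≫ Pb.obj.hom = U.obj.hom := by
    show a' ≫ (p₁ ≫ V.obj.hom) = U.obj.hom
    rw [← Category.assoc, ha1]
    exact Over.w (TribeSlice.homOf ub)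
  let ab : U ⟶ Pb := ObjectProperty.homMk (Over.homMk a' haw)
  have hfibTB : TB.fib pb1 := (hTB pb1).mpr hfib₁
  have hsq2 : ab ≫ pb1 = ub ≫ (𝟙 V) := by
    apply ObjectProperty.hom_ext
    apply Over.OverMorphism.ext
    show a' ≫ p₁ = (TribeSlice.homOf ub).left ≫ 𝟙 V.obj.left
    rw [ha1, Category.comp_id]
  obtain ⟨l, hl1, hl2⟩ := anodyne_lift h hfibTB hsq2
  refine ⟨⟨(TribeSlice.homOf l).left ≫ p₂, ?_, ?_⟩⟩
  · rw [← Category.assoc]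
    have : (TribeSlice.homOf ub).left ≫ (TribeSlice.homOf l).left
        = (TribeSlice.homOf (ub ≫ l)).left := rfl
    rw [this, hl1]
    exact ha2
  · rw [Category.assoc, ← hP.w, ← Category.assoc]
    have : (TribeSlice.homOf l).left ≫ p₁ = (TribeSlice.homOf (l ≫ pb1)).left := rfl
    rw [this, hl2]
    exact Category.id_comp b

/-- A `TB`-homotopy in the slice tribe yields an `E`-homotopy between the underlying maps. -/
lemma slice_homotopic_down
    (hTB : ∀ {U V : TribeSlice T B} (u : U ⟶ V),
      TB.fib u ↔ T.fib (TribeSlice.homOf u).left)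
    {U V : TribeSlice T B} {u v : U ⟶ V} (h : Homotopic TB u v) :
    Homotopic T (TribeSlice.homOf u).left (TribeSlice.homOf v).left := by
  obtain ⟨Q, H, h0, h1⟩ := h
  obtain ⟨R⟩ := exists_pathObj T V.obj.left
  have hσ : Anodyne T.toClan (TribeSlice.homOf Q.σ).left :=
    slice_anodyne_down T TB hTB Q.σ Q.anodyne_σ
  obtain ⟨bot, hb1, hb2⟩ : ∃ b : Q.P.obj.left ⟶ R.BB,
      b ≫ R.pr₁ = (TribeSlice.homOf Q.d₀).left ∧ b ≫ R.pr₂ = (TribeSlice.homOf Q.d₁).left :=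
    ⟨R.isProd.lift _ _ (T.one_isTerminal.hom_ext _ _),
      R.isProd.lift_fst _ _ _, R.isProd.lift_snd _ _ _⟩
  have hσd₀ : (TribeSlice.homOf Q.σ).left ≫ (TribeSlice.homOf Q.d₀).left = 𝟙 V.obj.left := by
    rw [← slice_comp_left, Q.σ_d₀]; rfl
  have hσd₁ : (TribeSlice.homOf Q.σ).left ≫ (TribeSlice.homOf Q.d₁).left = 𝟙 V.obj.left := by
    rw [← slice_comp_left, Q.σ_d₁]; rfl
  have hw : R.σ ≫ R.pair = (TribeSlice.homOf Q.σ).left ≫ bot := by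
    apply R.isProd.hom_ext
    · rw [Category.assoc, R.pair_pr₁, R.σ_d₀, Category.assoc, hb1, hσd₀]
    · rw [Category.assoc, R.pair_pr₂, R.σ_d₁, Category.assoc, hb2, hσd₁]
  obtain ⟨θ, hθ1, hθ2⟩ := anodyne_lift hσ R.fib_pair hw
  have e0 : θ ≫ R.d₀ = (TribeSlice.homOf Q.d₀).left := by
    rw [← R.pair_pr₁, ← Category.assoc, hθ2, hb1]
  have e1 : θ ≫ R.d₁ = (TribeSlice.homOf Q.d₁).left := by
    rw [← R.pair_pr₂, ← Category.assoc, hθ2, hb2]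
  refine ⟨R, (TribeSlice.homOf H).left ≫ θ, ?_, ?_⟩
  · rw [Category.assoc, e0, ← slice_comp_left, h0]
  · rw [Category.assoc, e1, ← slice_comp_left, h1]

end Slice

end TribeAux

/-- A fibration `f : X ⟶ B` in a tribe `E` is a homotopy equivalence
iff the object `(X, f)` of the local tribe `E(B)` is contractible, i.e. the map
`(X, f) ⟶ (B, 1_B)` to the terminal object of `E(B)` is a homotopy equivalence in
`E(B)`.  Here `TB` is the canonical tribe structure on `E(B)`, in which a map is a
fibration iff its underlying map in `E` is. -/
theorem trivialFibration_iff_contractible {E : Type u} [Category.{v} E] (T : Tribe E)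
    {X B : E} (f : X ⟶ B) (hf : T.fib f)
    (TB : Tribe (TribeSlice T B))
    (hTB : ∀ {U V : TribeSlice T B} (u : U ⟶ V),
      TB.fib u ↔ T.fib (TribeSlice.homOf u).left) :
    IsHomotopyEquiv T f ↔
      IsHomotopyEquiv TB
        (X := ⟨Over.mk f, hf⟩)
        (Y := ⟨Over.mk (𝟙 B), T.fib_of_isIso (𝟙 B) inferInstance⟩)
        (ObjectProperty.homMk (Over.homMk f (by simp))) := by
  open TribeAux in
  constructor
  · rintro ⟨g, h1, h2⟩
    -- a strict section `s` of `f`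
    obtain ⟨s, hs⟩ := section_of_fib T hf h2
    -- `f ≫ s` is homotopic to the identity in `E`
    have hpre : Homotopic T ((f ≫ s) ≫ (f ≫ g)) ((f ≫ s) ≫ 𝟙 X) := homotopic_precomp T h1 _
    have e1 : (f ≫ s) ≫ (f ≫ g) = f ≫ g := by
      rw [Category.assoc, ← Category.assoc s, hs, Category.id_comp]
    rw [e1, Category.comp_id] at hpre
    have hk : Homotopic T (f ≫ s) (𝟙 X) := homotopic_trans T (homotopic_symm T hpre) h1
    -- factor `s` in the slice tribe as anodyne followed by fibration
    set X₀ : TribeSlice T B := ⟨Over.mk f, hf⟩ with hX₀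
    set B₀ : TribeSlice T B := ⟨Over.mk (𝟙 B), T.fib_of_isIso (𝟙 B) inferInstance⟩ with hB₀
    let sb : B₀ ⟶ X₀ := ObjectProperty.homMk (Over.homMk s (by exact hs) : B₀.obj ⟶ X₀.obj)
    obtain ⟨Zb, ub, qb, hubano, hqbfib, hfact⟩ := TB.exists_fact sb
    have hq : T.fib (TribeSlice.homOf qb).left := (hTB qb).mp hqbfib
    have huq : (TribeSlice.homOf ub).left ≫ (TribeSlice.homOf qb).left = s := by
      rw [← slice_comp_left, hfact]; rfl
    have hz : (TribeSlice.homOf qb).left ≫ f = Zb.obj.hom := by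
      exact Over.w (TribeSlice.homOf qb)
    -- a section `r` of `q := qb.left`
    have hKq : Homotopic T
        ((f ≫ (TribeSlice.homOf ub).left) ≫ (TribeSlice.homOf qb).left) (𝟙 X) := by
      rw [Category.assoc, huq]; exact hk
    obtain ⟨r, hr⟩ := section_of_fib T hq hKq
    have hrz : r ≫ Zb.obj.hom = f := by
      rw [← hz, ← Category.assoc, hr, Category.id_comp]
    -- the retraction of `ub` in the slice tribe
    let ζ : Zb ⟶ B₀ := ObjectProperty.homMk (Over.homMk Zb.obj.hom (by exact Category.comp_id _) : Zb.obj ⟶ B₀.obj)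
    have hubζ : ub ≫ ζ = 𝟙 B₀ := by
      apply ObjectProperty.hom_ext
      apply Over.OverMorphism.ext
      show (TribeSlice.homOf ub).left ≫ Zb.obj.hom = 𝟙 B
      exact Over.w (TribeSlice.homOf ub)
    have hζub : Homotopic TB (ζ ≫ ub) (𝟙 Zb) := retr_homotopy TB hubano hubζ
    let rb : X₀ ⟶ Zb := ObjectProperty.homMk (Over.homMk r hrz)
    have hrbqb : rb ≫ qb = 𝟙 X₀ := by
      apply ObjectProperty.hom_ext
      apply Over.OverMorphism.ext
      show r ≫ (TribeSlice.homOf qb).left = 𝟙 X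
      exact hr
    refine ⟨sb, ?_, ?_⟩
    · have hmid : Homotopic TB (rb ≫ (ζ ≫ ub) ≫ qb) (rb ≫ (𝟙 Zb) ≫ qb) :=
        homotopic_precomp TB (homotopic_comp TB hζub qb) rb
      have e2 : rb ≫ (ζ ≫ ub) ≫ qb = (ObjectProperty.homMk (Over.homMk f (by exact Category.comp_id f) : X₀.obj ⟶ B₀.obj) : X₀ ⟶ B₀) ≫ sb := by
        apply ObjectProperty.hom_ext
        apply Over.OverMorphism.ext
        show r ≫ (Zb.obj.hom ≫ (TribeSlice.homOf ub).left) ≫ (TribeSlice.homOf qb).left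
          = f ≫ s
        rw [← Category.assoc, ← Category.assoc, hrz, Category.assoc, huq]
      have e3 : rb ≫ (𝟙 Zb) ≫ qb = 𝟙 X₀ := by rw [Category.id_comp, hrbqb]
      rw [e2, e3] at hmid
      exact hmid
    · have e4 : sb ≫ (ObjectProperty.homMk (Over.homMk f (by exact Category.comp_id f) : X₀.obj ⟶ B₀.obj) : X₀ ⟶ B₀) = 𝟙 B₀ := by
        apply ObjectProperty.hom_ext
        apply Over.OverMorphism.ext
        show s ≫ f = 𝟙 B
        exact hs
      rw [e4]
      exact homotopic_refl TB _
  · rintro ⟨gb, h1, h2⟩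
    have hs : (TribeSlice.homOf gb).left ≫ f = 𝟙 B := by
      simpa using Over.w (TribeSlice.homOf gb)
    refine ⟨(TribeSlice.homOf gb).left, ?_, ?_⟩
    · have := slice_homotopic_down T TB hTB h1
      have e5 : (TribeSlice.homOf
          ((ObjectProperty.homMk (Over.homMk f (by simp)) : (⟨Over.mk f, hf⟩ : TribeSlice T B) ⟶
            ⟨Over.mk (𝟙 B), T.fib_of_isIso (𝟙 B) inferInstance⟩) ≫ gb)).left
          = f ≫ (TribeSlice.homOf gb).left := rfl
      rw [e5] at this
      exact this
    · rw [hs]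
      exact homotopic_refl T _
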